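/- arXiv:1210.5235 — 2 statements merged into one kernel-verified Lean document; each statement's English description precedes it below -/
import Mathlib

section
/- The PR density update has an explicit product form: the Radon–Nikodym derivative dF_n/dF₀ (θ) equals ∏_{i=1}^n [(1−w_i) + w_i p_θ(Y_i)/p_{i−1}(Y_i)], where p_{i−1}(Y_i) = ∫ p_θ(Y_i) dF_{i−1}(θ). -/
open MeasureTheory ENNReal Finset

/-- Explicit product form of the PR update: `dF_n/dF₀(θ) = ∏_{i=1}^n [(1-w_i) + w_i g_i(θ)/p_{i-1}(Y_i)]`,
where `g i θ = p_θ(Y_i)` and `p_{i-1}(Y_i) = ∫ g_i dF_{i-1}`. -/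
theorem pr_product_form {Θ : Type*} [MeasurableSpace Θ]
    (F : ℕ → Measure Θ) (w : ℕ → ℝ) (g : ℕ → Θ → ℝ≥0∞)
    (hg : ∀ i, Measurable (g i))
    (hw : ∀ i, 0 < w i ∧ w i < 1)
    (hpos : ∀ i, 0 < ∫⁻ θ, g (i + 1) θ ∂(F i))
    (hfin : ∀ i, ∫⁻ θ, g (i + 1) θ ∂(F i) < ∞)
    (hrec : ∀ i, F (i + 1)
      = (1 - ENNReal.ofReal (w (i + 1))) • F i
        + (ENNReal.ofReal (w (i + 1)) / ∫⁻ θ, g (i + 1) θ ∂(F i)) •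
            (F i).withDensity (g (i + 1)))
    (h0 : IsProbabilityMeasure (F 0)) :
    ∀ n, F n = (F 0).withDensity (fun θ =>
      ∏ i ∈ Finset.range n,
        ((1 - ENNReal.ofReal (w (i + 1)))
          + ENNReal.ofReal (w (i + 1)) * g (i + 1) θ / ∫⁻ θ', g (i + 1) θ' ∂(F i))) := by
  intro n
  induction n with
  | zero => simp [withDensity_one]
  | succ n ih =>
    set P : Θ → ℝ≥0∞ := fun θ =>
      ∏ i ∈ Finset.range n,
        ((1 - ENNReal.ofReal (w (i + 1)))
          + ENNReal.ofReal (w (i + 1)) * g (i + 1) θ / ∫⁻ θ', g (i + 1) θ' ∂(F i)) with hP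
    have hPm : Measurable P := by
      apply Finset.measurable_prod
      intro i _
      exact (measurable_const.add (((hg (i + 1)).const_mul _).div_const _))
    set c : ℝ≥0∞ := 1 - ENNReal.ofReal (w (n + 1)) with hc
    set Z : ℝ≥0∞ := ∫⁻ θ, g (n + 1) θ ∂(F n) with hZ
    have key : F (n + 1) = (F 0).withDensity
        (fun θ => P θ * (c + ENNReal.ofReal (w (n + 1)) * g (n + 1) θ / Z)) := by
      rw [hrec n, ih]
      have h1 : c • (F 0).withDensity P = (F 0).withDensity (fun θ => c * P θ) := by
        rw [← withDensity_smul c hPm]; rfl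
      have h2 : ((F 0).withDensity P).withDensity (g (n + 1))
          = (F 0).withDensity (fun θ => P θ * g (n + 1) θ) := by
        rw [← withDensity_mul _ hPm (hg (n + 1))]; rfl
      rw [h1, h2, ← withDensity_smul _ (show Measurable (fun θ => P θ * g (n + 1) θ) from hPm.mul (hg (n + 1))),
        ← withDensity_add_right _ ((show Measurable (fun θ => P θ * g (n + 1) θ) from hPm.mul (hg (n + 1))).const_smul _)]
      congr 1
      funext θ
      simp only [Pi.add_apply, Pi.smul_apply, smul_eq_mul, div_eq_mul_inv]
      rw [show (∫⁻ θ, g (n + 1) θ ∂(F 0).withDensity P) = Z from by rw [hZ, ih]]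
      ring
    rw [key]
    congr 1
    funext θ
    rw [Finset.prod_range_succ]
end

section
/- General asymptotic optimality theorem: Suppose L(δ̂_n(y),θ) → L(δ_F(y),θ) a.s. for (μ×F)-a.a. (y,θ); there exist measurable h_n(y,θ) (possibly random) with h_n → h a.s. (μ×F)-a.e., L(δ̂_n(y),θ) ≤ h_n(y,θ) a.s. for all n and (μ×F)-a.a. (y,θ), and ∫∫ h_n(y,θ) p_θ(y) dF(θ) dμ(y) → ∫∫ h(y,θ) p_θ(y) dF(θ) dμ(y) < ∞ a.s. Then ρ_n(F) = ∫∫ L(δ̂_n(y),θ) p_θ(y) dF(θ) dμ(y) → ρ(F) = ∫∫ L(δ_F(y),θ) p_θ(y) dF(θ) dμ(y) almost surely. -/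
open MeasureTheory Filter Topology

open scoped ENNReal

/-- Pratt's lemma / generalized dominated convergence theorem. -/
lemma pratt_aux {α : Type*} [MeasurableSpace α] {μ : Measure α}
    {f : ℕ → α → ℝ} {flim : α → ℝ} {g : ℕ → α → ℝ} {glim : α → ℝ}
    (hfmeas : ∀ n, AEStronglyMeasurable (f n) μ)
    (hflimmeas : AEStronglyMeasurable flim μ)
    (hgint : ∀ n, Integrable (g n) μ) (hglimint : Integrable glim μ)
    (hf0 : ∀ n, 0 ≤ᵐ[μ] f n) (hfg : ∀ n, f n ≤ᵐ[μ] g n)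
    (hfconv : ∀ᵐ a ∂μ, Tendsto (fun n => f n a) atTop (𝓝 (flim a)))
    (hgconv : ∀ᵐ a ∂μ, Tendsto (fun n => g n a) atTop (𝓝 (glim a)))
    (hgi : Tendsto (fun n => ∫ a, g n a ∂μ) atTop (𝓝 (∫ a, glim a ∂μ))) :
    Tendsto (fun n => ∫ a, f n a ∂μ) atTop (𝓝 (∫ a, flim a ∂μ)) := by
  -- a.e. facts about the limit functions
  have hbase : ∀ᵐ a ∂μ, (∀ n, 0 ≤ f n a) ∧ (∀ n, f n a ≤ g n a) ∧
      Tendsto (fun n => f n a) atTop (𝓝 (flim a)) ∧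
      Tendsto (fun n => g n a) atTop (𝓝 (glim a)) :=
    (ae_all_iff.2 hf0).and ((ae_all_iff.2 hfg).and (hfconv.and hgconv))
  have hg0 : ∀ n, 0 ≤ᵐ[μ] g n := fun n =>
    hbase.mono fun a ⟨h1, h2, _, _⟩ => (h1 n).trans (h2 n)
  have hflim0 : 0 ≤ᵐ[μ] flim :=
    hbase.mono fun a ⟨h1, _, h3, _⟩ => ge_of_tendsto' h3 h1
  have hglim0 : 0 ≤ᵐ[μ] glim := by
    filter_upwards [hbase] with a ⟨h1, h2, _, h4⟩
    exact ge_of_tendsto' h4 fun n => (h1 n).trans (h2 n)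
  have hflimglim : flim ≤ᵐ[μ] glim := by
    filter_upwards [hbase] with a ⟨h1, h2, h3, h4⟩
    exact le_of_tendsto_of_tendsto' h3 h4 h2
  have hfint : ∀ n, Integrable (f n) μ := fun n =>
    (hgint n).mono' (hfmeas n) <| by
      filter_upwards [hf0 n, hfg n] with a h1 h2
      rwa [Real.norm_eq_abs, abs_of_nonneg h1]
  have hflimint : Integrable flim μ :=
    hglimint.mono' hflimmeas <| by
      filter_upwards [hflim0, hflimglim] with a h1 h2
      rwa [Real.norm_eq_abs, abs_of_nonneg h1]
  -- lintegral versions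
  set Gn : ℕ → ℝ≥0∞ := fun n => ∫⁻ a, ENNReal.ofReal (g n a) ∂μ with hGn_def
  set Gl : ℝ≥0∞ := ∫⁻ a, ENNReal.ofReal (glim a) ∂μ with hGl_def
  set D : ℕ → ℝ≥0∞ := fun n => ∫⁻ a, ENNReal.ofReal ‖f n a - flim a‖ ∂μ with hD_def
  have hGn_eq : ∀ n, ENNReal.ofReal (∫ a, g n a ∂μ) = Gn n := fun n =>
    ofReal_integral_eq_lintegral_ofReal (hgint n) (hg0 n)
  have hGl_eq : ENNReal.ofReal (∫ a, glim a ∂μ) = Gl :=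
    ofReal_integral_eq_lintegral_ofReal hglimint hglim0
  have hGl_ne : Gl ≠ ∞ := by rw [← hGl_eq]; exact ENNReal.ofReal_ne_top
  have hGn_ne : ∀ n, Gn n ≠ ∞ := fun n => by rw [← hGn_eq n]; exact ENNReal.ofReal_ne_top
  have hGtend : Tendsto Gn atTop (𝓝 Gl) := by
    rw [← hGl_eq]
    have hfe : Gn = fun n => ENNReal.ofReal (∫ a, g n a ∂μ) := by
      funext n; rw [hGn_eq]
    rw [hfe]
    exact (ENNReal.continuous_ofReal.tendsto _).comp hgi
  -- pointwise bound |f n - flim| ≤ g n + glim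
  have habs_le : ∀ n, ∀ᵐ a ∂μ, ‖f n a - flim a‖ ≤ g n a + glim a := by
    intro n
    filter_upwards [hbase, hflim0, hflimglim] with a ⟨h1, h2, _, _⟩ hf1 hf2
    calc ‖f n a - flim a‖ ≤ ‖f n a‖ + ‖flim a‖ := norm_sub_le _ _
      _ = f n a + flim a := by rw [Real.norm_of_nonneg (h1 n), Real.norm_of_nonneg hf1]
      _ ≤ g n a + glim a := add_le_add (h2 n) hf2
  have hgn_aem : ∀ n, AEMeasurable (fun a => ENNReal.ofReal (g n a)) μ :=
    fun n => (hgint n).aemeasurable.ennreal_ofReal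
  have habs_meas : ∀ n, AEMeasurable (fun a => ENNReal.ofReal ‖f n a - flim a‖) μ :=
    fun n => ((hfint n).aemeasurable.sub hflimint.aemeasurable).norm.ennreal_ofReal
  have hsum_eq : ∀ n, ∫⁻ a, ENNReal.ofReal (g n a + glim a) ∂μ = Gn n + Gl := by
    intro n
    have h1 : ∫⁻ a, ENNReal.ofReal (g n a + glim a) ∂μ
        = ∫⁻ a, (ENNReal.ofReal (g n a) + ENNReal.ofReal (glim a)) ∂μ := by
      refine lintegral_congr_ae ?_
      filter_upwards [hg0 n, hglim0] with a ha hb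
      rw [ENNReal.ofReal_add ha hb]
    rw [h1, lintegral_add_left' (hgn_aem n)]
  have hD_le : ∀ n, D n ≤ Gn n + Gl := by
    intro n
    rw [← hsum_eq n]
    refine lintegral_mono_ae ?_
    filter_upwards [habs_le n] with a ha
    exact ENNReal.ofReal_le_ofReal ha
  have hD_ne : ∀ n, D n ≠ ∞ := fun n =>
    ((hD_le n).trans_lt (by
      exact ENNReal.add_lt_top.2 ⟨(hGn_ne n).lt_top, hGl_ne.lt_top⟩)).ne
  -- Fatou's lemma applied to φ n = g n + glim - |f n - flim|
  have hφ_meas : ∀ n, AEMeasurable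
      (fun a => ENNReal.ofReal (g n a + glim a - ‖f n a - flim a‖)) μ := fun n =>
    (((hgint n).aemeasurable.add hglimint.aemeasurable).sub
      ((hfint n).aemeasurable.sub hflimint.aemeasurable).norm).ennreal_ofReal
  have hφ_eq : ∀ n, ∫⁻ a, ENNReal.ofReal (g n a + glim a - ‖f n a - flim a‖) ∂μ
      = (Gn n + Gl) - D n := by
    intro n
    have h1 : ∫⁻ a, ENNReal.ofReal (g n a + glim a - ‖f n a - flim a‖) ∂μ
        = ∫⁻ a, (ENNReal.ofReal (g n a + glim a) - ENNReal.ofReal ‖f n a - flim a‖) ∂μ :=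
      lintegral_congr_ae (Eventually.of_forall fun a =>
        ENNReal.ofReal_sub _ (norm_nonneg _))
    rw [h1, lintegral_sub' (habs_meas n) (hD_ne n) ?le, hsum_eq n]
    case le =>
      filter_upwards [habs_le n] with a ha
      exact ENNReal.ofReal_le_ofReal ha
  have hFatou : Gl + Gl ≤ atTop.liminf (fun n => (Gn n + Gl) - D n) := by
    have key : ∫⁻ a, ENNReal.ofReal (glim a + glim a) ∂μ
        ≤ atTop.liminf fun n =>
          ∫⁻ a, ENNReal.ofReal (g n a + glim a - ‖f n a - flim a‖) ∂μ := by
      refine le_trans (lintegral_mono_ae ?_) (lintegral_liminf_le' hφ_meas)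
      filter_upwards [hbase] with a ⟨h1, h2, h3, h4⟩
      have htd : Tendsto (fun n => ENNReal.ofReal (g n a + glim a - ‖f n a - flim a‖))
          atTop (𝓝 (ENNReal.ofReal (glim a + glim a))) := by
        refine (ENNReal.continuous_ofReal.tendsto _).comp ?_
        have habs : Tendsto (fun n => ‖f n a - flim a‖) atTop (𝓝 0) := by
          have h5 : Tendsto (fun n => f n a - flim a) atTop (𝓝 (flim a - flim a)) :=
            h3.sub tendsto_const_nhds
          have h6 := h5.norm
          simpa using h6
        have h7 : Tendsto (fun n => g n a + glim a) atTop (𝓝 (glim a + glim a)) :=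
          h4.add tendsto_const_nhds
        have h8 : Tendsto (fun n => g n a + glim a - ‖f n a - flim a‖) atTop
            (𝓝 (glim a + glim a - 0)) := h7.sub habs
        simpa using h8
      exact htd.liminf_eq.symm.le
    have hsum2 : ∫⁻ a, ENNReal.ofReal (glim a + glim a) ∂μ = Gl + Gl := by
      have h1 : ∫⁻ a, ENNReal.ofReal (glim a + glim a) ∂μ
          = ∫⁻ a, (ENNReal.ofReal (glim a) + ENNReal.ofReal (glim a)) ∂μ := by
        refine lintegral_congr_ae ?_
        filter_upwards [hglim0] with a ha
        exact ENNReal.ofReal_add ha ha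
      rw [h1, lintegral_add_left' hglimint.aemeasurable.ennreal_ofReal]
    rw [← hsum2]
    calc ∫⁻ a, ENNReal.ofReal (glim a + glim a) ∂μ
        ≤ atTop.liminf fun n =>
          ∫⁻ a, ENNReal.ofReal (g n a + glim a - ‖f n a - flim a‖) ∂μ := key
      _ = atTop.liminf fun n => (Gn n + Gl) - D n := by
        congr 1; funext n; exact hφ_eq n
  -- conclude D n → 0 via an ε-argument
  have hD0 : Tendsto D atTop (𝓝 0) := by
    rw [ENNReal.tendsto_nhds_zero]
    intro ε hε
    have hε2 : (0 : ℝ≥0∞) < ε / 2 := ENNReal.half_pos hε.ne'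
    have hGGne : Gl + Gl ≠ ∞ := by
      simp [ENNReal.add_eq_top, hGl_ne]
    have hev1 : ∀ᶠ n in atTop, Gn n + Gl ≤ Gl + Gl + ε / 2 := by
      have htd : Tendsto (fun n => Gn n + Gl) atTop (𝓝 (Gl + Gl)) :=
        hGtend.add tendsto_const_nhds
      have hlt : Gl + Gl < Gl + Gl + ε / 2 := ENNReal.lt_add_right hGGne hε2.ne'
      exact (htd.eventually_lt_const hlt).mono fun n hn => hn.le
    have hev2 : ∀ᶠ n in atTop, Gl + Gl - ε / 2 ≤ (Gn n + Gl) - D n := by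
      by_cases hc : Gl + Gl ≤ ε / 2
      · refine Eventually.of_forall fun n => ?_
        rw [tsub_eq_zero_of_le hc]
        exact zero_le
      · have hlt : Gl + Gl - ε / 2 < Gl + Gl :=
          ENNReal.sub_lt_self hGGne (fun h0 => hc (by simp [h0])) hε2.ne'
        exact (eventually_lt_of_lt_liminf (hlt.trans_le hFatou)).mono
          fun n hn => hn.le
    filter_upwards [hev1, hev2] with n h1 h2
    have hfin : Gn n + Gl ≠ ∞ := by simp [ENNReal.add_eq_top, hGn_ne n, hGl_ne]
    have hDn : D n = (Gn n + Gl) - ((Gn n + Gl) - D n) :=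
      (ENNReal.sub_sub_cancel hfin (hD_le n)).symm
    rw [hDn]
    calc (Gn n + Gl) - ((Gn n + Gl) - D n)
        ≤ (Gl + Gl + ε / 2) - (Gl + Gl - ε / 2) := tsub_le_tsub h1 h2
      _ ≤ ε := by
          rw [tsub_le_iff_right]
          by_cases hc : ε / 2 ≤ Gl + Gl
          · calc Gl + Gl + ε / 2 = ε / 2 + (Gl + Gl) := add_comm _ _
              _ = ε / 2 + (ε / 2 + (Gl + Gl - ε / 2)) := by
                  rw [add_tsub_cancel_of_le hc]
              _ = ε + (Gl + Gl - ε / 2) := by rw [← add_assoc, ENNReal.add_halves]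
              _ ≤ ε + (Gl + Gl - ε / 2) := le_rfl
          · push_neg at hc
            rw [tsub_eq_zero_of_le hc.le, add_zero]
            calc Gl + Gl + ε / 2 ≤ ε / 2 + ε / 2 := add_le_add hc.le le_rfl
              _ = ε := ENNReal.add_halves ε
  -- translate back to real integrals
  have hd_eq : ∀ n, ∫ a, ‖f n a - flim a‖ ∂μ = (D n).toReal := by
    intro n
    have hm : AEStronglyMeasurable (fun a => ‖f n a - flim a‖) μ := by
      exact ((hfint n).sub hflimint).aestronglyMeasurable.norm
    rw [integral_eq_lintegral_of_nonneg_ae (Eventually.of_forall fun a => norm_nonneg _) hm]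
  have hd0 : Tendsto (fun n => ∫ a, ‖f n a - flim a‖ ∂μ) atTop (𝓝 0) := by
    have h2 : Tendsto (fun n => (D n).toReal) atTop (𝓝 0) := by
      simpa [Function.comp_def] using (ENNReal.tendsto_toReal (by simp : (0 : ℝ≥0∞) ≠ ⊤)).comp hD0
    simpa only [hd_eq] using h2
  have hsub : Tendsto (fun n => ∫ a, f n a ∂μ - ∫ a, flim a ∂μ) atTop (𝓝 0) := by
    refine squeeze_zero_norm (fun n => ?_) hd0
    rw [← integral_sub (hfint n) hflimint]
    exact norm_integral_le_integral_norm _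
  have hfinal := hsub.add (tendsto_const_nhds (x := ∫ a, flim a ∂μ) (f := atTop))
  simpa using hfinal

/-- General asymptotic optimality theorem (Theorem 1 of the paper): if the plug-in losses
converge a.s. `(μ×F)`-a.e. to the Bayes losses, and there are (possibly random) dominating
functions `h_n → h` with `L(δ̂_n(y),θ) ≤ h_n(y,θ)` and convergence of the `h_n`-integrals to
a finite limit, then the empirical Bayes risk `ρ_n(F)` converges a.s. to the Bayes risk
`ρ(F)`. -/
theorem asymptotic_optimality_general {Ω Y Θ A : Type*}
    [MeasurableSpace Ω] [MeasurableSpace Y] [MeasurableSpace Θ]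
    (P : Measure Ω) [IsProbabilityMeasure P]
    (μ : Measure Y) [SigmaFinite μ] (F : Measure Θ) [IsProbabilityMeasure F]
    (p : Θ → Y → ℝ) (hp : ∀ θ y, 0 ≤ p θ y)
    (L : A → Θ → ℝ) (hL : ∀ a θ, 0 ≤ L a θ)
    (δhat : ℕ → Ω → Y → A) (δF : Y → A)
    (h : Ω → Y × Θ → ℝ) (hn : ℕ → Ω → Y × Θ → ℝ)
    (hmeas : ∀ n ω, AEStronglyMeasurable
      (fun z : Y × Θ => L (δhat n ω z.1) z.2 * p z.2 z.1) (μ.prod F))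
    (hmeasF : AEStronglyMeasurable
      (fun z : Y × Θ => L (δF z.1) z.2 * p z.2 z.1) (μ.prod F))
    (hconvL : ∀ᵐ ω ∂P, ∀ᵐ z : Y × Θ ∂(μ.prod F),
      Tendsto (fun n => L (δhat n ω z.1) z.2) atTop (𝓝 (L (δF z.1) z.2)))
    (hconvh : ∀ᵐ ω ∂P, ∀ᵐ z : Y × Θ ∂(μ.prod F),
      Tendsto (fun n => hn n ω z) atTop (𝓝 (h ω z)))
    (hdom : ∀ᵐ ω ∂P, ∀ n, ∀ᵐ z : Y × Θ ∂(μ.prod F),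
      L (δhat n ω z.1) z.2 ≤ hn n ω z)
    (hnint : ∀ᵐ ω ∂P, ∀ n, Integrable (fun z : Y × Θ => hn n ω z * p z.2 z.1) (μ.prod F))
    (hint : ∀ᵐ ω ∂P, Integrable (fun z : Y × Θ => h ω z * p z.2 z.1) (μ.prod F))
    (hconvint : ∀ᵐ ω ∂P,
      Tendsto (fun n => ∫ z : Y × Θ, hn n ω z * p z.2 z.1 ∂(μ.prod F)) atTop
        (𝓝 (∫ z : Y × Θ, h ω z * p z.2 z.1 ∂(μ.prod F)))) :
    ∀ᵐ ω ∂P,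
      Tendsto (fun n => ∫ z : Y × Θ, L (δhat n ω z.1) z.2 * p z.2 z.1 ∂(μ.prod F))
        atTop (𝓝 (∫ z : Y × Θ, L (δF z.1) z.2 * p z.2 z.1 ∂(μ.prod F))) := by
  filter_upwards [hconvL, hconvh, hdom, hnint, hint, hconvint] with ω hcL hch hd hni hi hci
  refine pratt_aux (g := fun n z => hn n ω z * p z.2 z.1)
    (fun n => hmeas n ω) hmeasF hni hi ?_ ?_ ?_ ?_ hci
  · exact fun n => Eventually.of_forall fun z => mul_nonneg (hL _ _) (hp _ _)
  · exact fun n => (hd n).mono fun z hz => mul_le_mul_of_nonneg_right hz (hp _ _)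
  · exact hcL.mono fun z hz => hz.mul_const _
  · exact hch.mono fun z hz => hz.mul_const _
end
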